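/- Let T be a d-dimensional simplex in ℝ^d with integer vertices having exactly one interior lattice point, and suppose its barycentric coordinates β₀ ≥ β₁ ≥ … ≥ β_d > 0 (with respect to T) satisfy the inequalities ∑_{i=j+1}^{d} β_i ≥ ∏_{i=0}^{j} β_i for all j ∈ {0,…,d−1}. Then β_i ≥ (d+1)^{−2^i} for every i ∈ {0,…,d}. -/

import Mathlib

/-- Lower bounds `β_i ≥ (d+1)^{-2^i}` for the ordered barycentric coordinates of the
unique interior lattice point of a lattice simplex, given the inequalities of Theorem 1. -/
theorem stmt2 (d : ℕ) (v : Fin (d + 1) → Fin d → ℤ)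
    (hind : AffineIndependent ℝ (fun i => fun j => ((v i j : ℤ) : ℝ)))
    (q : Fin d → ℤ)
    (hq : (fun j => ((q j : ℤ) : ℝ)) ∈
      interior (convexHull ℝ (Set.range (fun i => fun j => ((v i j : ℤ) : ℝ)))))
    (huniq : ∀ q' : Fin d → ℤ,
      (fun j => ((q' j : ℤ) : ℝ)) ∈
        interior (convexHull ℝ (Set.range (fun i => fun j => ((v i j : ℤ) : ℝ)))) → q' = q)
    (β : Fin (d + 1) → ℝ)
    (hsum : ∑ i, β i = 1)
    (hbar : (∑ i, β i • (fun j => ((v i j : ℤ) : ℝ))) = fun j => ((q j : ℤ) : ℝ))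
    (hord : ∀ i j : Fin (d + 1), i ≤ j → β j ≤ β i)
    (hpos : ∀ i, 0 < β i)
    (hineq : ∀ j : ℕ, j < d →
      ∑ i ∈ Finset.univ.filter (fun i : Fin (d + 1) => j < (i : ℕ)), β i ≥
        ∏ i ∈ Finset.univ.filter (fun i : Fin (d + 1) => (i : ℕ) ≤ j), β i) :
    ∀ i : Fin (d + 1), β i ≥ (((d : ℝ) + 1) ^ (2 ^ (i : ℕ)))⁻¹ := by
  have hd1 : (0:ℝ) < (d:ℝ) + 1 := by positivity
  have key : ∀ n : ℕ, ∀ hn : n < d + 1,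
      (((d:ℝ) + 1) ^ (2 ^ n))⁻¹ ≤ β ⟨n, hn⟩ ∧
      (((d:ℝ) + 1) ^ (2 ^ (n+1) - 1))⁻¹ ≤
        ∏ i ∈ Finset.univ.filter (fun i : Fin (d+1) => (i:ℕ) ≤ n), β i := by
    intro n
    induction n with
    | zero =>
      intro hn
      have h0 : (((d:ℝ)+1))⁻¹ ≤ β ⟨0, hn⟩ := by
        rw [inv_eq_one_div, div_le_iff₀ hd1]
        calc (1:ℝ) = ∑ i, β i := hsum.symm
          _ ≤ ∑ _i : Fin (d+1), β ⟨0,hn⟩ :=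
            Finset.sum_le_sum (fun i _ => hord ⟨0,hn⟩ i (by simp [Fin.le_def]))
          _ = β ⟨0,hn⟩ * ((d:ℝ)+1) := by
            rw [Finset.sum_const, Finset.card_fin, nsmul_eq_mul]
            push_cast; ring
      have hfilt : Finset.univ.filter (fun i : Fin (d+1) => (i:ℕ) ≤ 0) = {⟨0,hn⟩} := by
        ext i; simp only [Finset.mem_filter, Finset.mem_univ, true_and, Finset.mem_singleton, Fin.ext_iff, Fin.val_mk, Nat.le_zero]
      constructor
      · simpa using h0
      · rw [hfilt, Finset.prod_singleton]
        norm_num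
        simpa using h0
    | succ n ih =>
      intro hn
      have hn' : n < d + 1 := by omega
      obtain ⟨ihb, ihp⟩ := ih hn'
      -- sum over i > n is at most (d+1) * β (n+1)
      have hsum_le : ∑ i ∈ Finset.univ.filter (fun i : Fin (d+1) => n < (i:ℕ)), β i
          ≤ ((d:ℝ)+1) * β ⟨n+1, hn⟩ := by
        calc ∑ i ∈ Finset.univ.filter (fun i : Fin (d+1) => n < (i:ℕ)), β i
            ≤ ∑ _i ∈ Finset.univ.filter (fun i : Fin (d+1) => n < (i:ℕ)), β ⟨n+1, hn⟩ := by
              refine Finset.sum_le_sum fun i hi => ?_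
              simp only [Finset.mem_filter] at hi
              exact hord ⟨n+1, hn⟩ i (by simp [Fin.le_def]; omega)
          _ = ((Finset.univ.filter (fun i : Fin (d+1) => n < (i:ℕ))).card : ℝ)
                * β ⟨n+1, hn⟩ := by rw [Finset.sum_const, nsmul_eq_mul]
          _ ≤ ((d:ℝ)+1) * β ⟨n+1, hn⟩ := by
              refine mul_le_mul_of_nonneg_right ?_ (hpos _).le
              have : (Finset.univ.filter (fun i : Fin (d+1) => n < (i:ℕ))).card ≤ d + 1 := by
                calc _ ≤ (Finset.univ : Finset (Fin (d+1))).card :=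
                      Finset.card_le_card (Finset.filter_subset _ _)
                  _ = d + 1 := Finset.card_fin _
              exact_mod_cast this
      have hP : (((d:ℝ)+1) ^ (2 ^ (n+1) - 1))⁻¹ ≤ ((d:ℝ)+1) * β ⟨n+1, hn⟩ :=
        le_trans (le_trans ihp (hineq n (by omega))) hsum_le
      have hb : (((d:ℝ)+1) ^ (2 ^ (n+1)))⁻¹ ≤ β ⟨n+1, hn⟩ := by
        have hpow : ((d:ℝ)+1) ^ (2 ^ (n+1)) = ((d:ℝ)+1) ^ (2 ^ (n+1) - 1) * ((d:ℝ)+1) := by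
          rw [← pow_succ]
          congr 1
          have : 1 ≤ 2 ^ (n+1) := Nat.one_le_two_pow
          omega
        rw [hpow, mul_inv]
        calc (((d:ℝ)+1) ^ (2 ^ (n+1) - 1))⁻¹ * (((d:ℝ)+1))⁻¹
            ≤ (((d:ℝ)+1) * β ⟨n+1, hn⟩) * (((d:ℝ)+1))⁻¹ :=
              mul_le_mul_of_nonneg_right hP (by positivity)
          _ = β ⟨n+1, hn⟩ := by field_simp
      refine ⟨hb, ?_⟩
      have hfilt : Finset.univ.filter (fun i : Fin (d+1) => (i:ℕ) ≤ n+1)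
          = insert ⟨n+1, hn⟩ (Finset.univ.filter (fun i : Fin (d+1) => (i:ℕ) ≤ n)) := by
        ext i
        simp [Fin.ext_iff]
        omega
      have hnotmem : (⟨n+1, hn⟩ : Fin (d+1)) ∉
          Finset.univ.filter (fun i : Fin (d+1) => (i:ℕ) ≤ n) := by simp
      rw [hfilt, Finset.prod_insert hnotmem]
      have hexp : ((d:ℝ)+1) ^ (2 ^ (n+2) - 1)
          = ((d:ℝ)+1) ^ (2 ^ (n+1)) * ((d:ℝ)+1) ^ (2 ^ (n+1) - 1) := by
        rw [← pow_add]
        congr 1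
        have : 1 ≤ 2 ^ (n+1) := Nat.one_le_two_pow
        have h2 : 2 ^ (n+2) = 2 * 2 ^ (n+1) := by ring
        omega
      rw [hexp, mul_inv]
      exact mul_le_mul hb ihp (by positivity) (hpos _).le
  intro i
  have := (key i.val i.isLt).1
  simpa [ge_iff_le] using this
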